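/- For any density matrix ρ on ℂ^d there exists a pure-state decomposition ρ = Σ_j λ_j |μ_j⟩⟨μ_j| which is conjugate-orthogonal: √(λ_i λ_j) ⟨μ_i, μ_j*⟩ = δ_{ij} D_j, where D_j are the eigenvalues of √(√ρ ρᵀ √ρ). Consequently Σ_j λ_j |⟨μ_j*, μ_j⟩| = Tr√(√ρ ρᵀ √ρ) = √F(ρ, ρᵀ). -/

import Mathlib

open Matrix
open scoped ComplexOrder

/-- Singular values of a complex square matrix: square roots of eigenvalues of `Aᴴ * A`. -/
noncomputable def singularValues {n : Type*} [Fintype n] [DecidableEq n]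
    (A : Matrix n n ℂ) : n → ℝ :=
  fun i => Real.sqrt ((Matrix.isHermitian_conjTranspose_mul_self A).eigenvalues i)

/-- Trace norm: sum of singular values. -/
noncomputable def traceNorm {n : Type*} [Fintype n] [DecidableEq n]
    (A : Matrix n n ℂ) : ℝ := ∑ i, singularValues A i

/-- Positive-semidefinite square root (zero for non-PSD input). -/
noncomputable def msqrt {n : Type*} [Fintype n] [DecidableEq n]
    (A : Matrix n n ℂ) : Matrix n n ℂ :=
  open scoped Classical in
  if h : A.PosSemidef then
    (h.1.eigenvectorUnitary : Matrix n n ℂ) *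
      Matrix.diagonal (fun i => ((Real.sqrt (h.1.eigenvalues i) : ℝ) : ℂ)) *
      (star h.1.eigenvectorUnitary : Matrix n n ℂ)
  else 0

/-- Root fidelity √F(ρ,σ) = Tr √(√ρ σ √ρ). -/
noncomputable def rootFid {n : Type*} [Fintype n] [DecidableEq n]
    (ρ σ : Matrix n n ℂ) : ℝ := ((msqrt (msqrt ρ * σ * msqrt ρ)).trace).re

/-- A density matrix: positive semidefinite with unit trace. -/
def IsDensity {n : Type*} [Fintype n] [DecidableEq n] (ρ : Matrix n n ℂ) : Prop :=
  ρ.PosSemidef ∧ ρ.trace = 1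

/-- Partial transpose on the second tensor factor. -/
noncomputable def ptB {dA dB : ℕ} (X : Matrix (Fin dA × Fin dB) (Fin dA × Fin dB) ℂ) :
    Matrix (Fin dA × Fin dB) (Fin dA × Fin dB) ℂ :=
  Matrix.of fun p q => X (p.1, q.2) (q.1, p.2)

/-- Hermitian inner product ⟨x,y⟩ = ∑ conj(xᵢ) yᵢ. -/
noncomputable def hinner {ι : Type*} [Fintype ι] (x y : ι → ℂ) : ℂ := ∑ i, star (x i) * y i

/-- Entrywise complex conjugate of a vector. -/
noncomputable def cconj {ι : Type*} (x : ι → ℂ) : ι → ℂ := fun i => star (x i)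

section Takagi
open Module Submodule
variable {d : ℕ}

/-- The antilinear map `x ↦ S (conj x)`. -/
noncomputable def tak (S : Matrix (Fin d) (Fin d) ℂ) (x : EuclideanSpace ℂ (Fin d)) :
    EuclideanSpace ℂ (Fin d) :=
  WithLp.toLp 2 (fun i => ∑ j, S i j * star (x j))

lemma tak_apply (S : Matrix (Fin d) (Fin d) ℂ) (x : EuclideanSpace ℂ (Fin d)) (i : Fin d) :
    tak S x i = ∑ j, S i j * star (x j) := rfl

lemma tak_add (S : Matrix (Fin d) (Fin d) ℂ) (x y : EuclideanSpace ℂ (Fin d)) :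
    tak S (x + y) = tak S x + tak S y := by
  ext i
  show (∑ j, S i j * star ((x + y) j)) = tak S x i + tak S y i
  simp [tak_apply, star_add, mul_add, Finset.sum_add_distrib]

lemma tak_smul (S : Matrix (Fin d) (Fin d) ℂ) (c : ℂ) (x : EuclideanSpace ℂ (Fin d)) :
    tak S (c • x) = star c • tak S x := by
  ext i
  show (∑ j, S i j * star ((c • x) j)) = star c * ∑ j, S i j * star (x j)
  rw [Finset.mul_sum]
  refine Finset.sum_congr rfl fun j _ => ?_
  show S i j * star (c * x j) = star c * (S i j * star (x j))
  rw [star_mul']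
  ring

lemma tak_inner (S : Matrix (Fin d) (Fin d) ℂ) (hS : Sᵀ = S) (x y : EuclideanSpace ℂ (Fin d)) :
    inner (𝕜 := ℂ) (tak S x) y = inner (𝕜 := ℂ) (tak S y) x := by
  have hsym : ∀ i j, S j i = S i j := fun i j => by
    conv_lhs => rw [← hS]
    rw [Matrix.transpose_apply]
  simp only [PiLp.inner_apply, RCLike.inner_apply, tak_apply, map_sum, _root_.map_mul,
    starRingEnd_apply, star_star, Finset.sum_mul, Finset.mul_sum]
  rw [Finset.sum_comm]
  refine Finset.sum_congr rfl fun a _ => Finset.sum_congr rfl fun b _ => ?_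
  rw [show S b a = S a b from hsym a b]
  ring

/-- The ℂ-linear square of `tak`. -/
noncomputable def takSq (S : Matrix (Fin d) (Fin d) ℂ) :
    Module.End ℂ (EuclideanSpace ℂ (Fin d)) where
  toFun x := tak S (tak S x)
  map_add' x y := by
    show tak S (tak S (x + y)) = tak S (tak S x) + tak S (tak S y)
    rw [tak_add, tak_add]
  map_smul' c x := by
    show tak S (tak S (c • x)) = (RingHom.id ℂ) c • tak S (tak S x)
    rw [tak_smul, tak_smul, star_star]
    rfl

lemma exists_takvec (S : Matrix (Fin d) (Fin d) ℂ) (hS : Sᵀ = S)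
    (W : Submodule ℂ (EuclideanSpace ℂ (Fin d))) (hW : W ≠ ⊥)
    (hinv : ∀ x ∈ W, tak S x ∈ W) :
    ∃ x, x ∈ W ∧ ‖x‖ = 1 ∧ ∃ σ : ℝ, 0 ≤ σ ∧ tak S x = (σ : ℂ) • x := by
  haveI : Nontrivial W := Submodule.nontrivial_iff_ne_bot.mpr hW
  obtain ⟨c, hc⟩ := Module.End.exists_eigenvalue
    ((takSq S).restrict (p := W) (q := W) (fun x hx => hinv _ (hinv _ hx)))
  obtain ⟨v, hv⟩ := hc.exists_hasEigenvector
  set u : EuclideanSpace ℂ (Fin d) := (v : EuclideanSpace ℂ (Fin d)) with hu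
  have huW : u ∈ W := v.2
  have hu0 : u ≠ 0 := by
    simpa [hu, Submodule.coe_eq_zero] using hv.2
  have hA : tak S (tak S u) = c • u := by
    have h1 := congrArg (Subtype.val) hv.apply_eq_smul
    simpa [LinearMap.restrict_apply, takSq, hu] using h1
  have hTu : tak S u ∈ W := hinv _ huW
  have hnu : ‖u‖ ≠ 0 := norm_ne_zero_iff.mpr hu0
  have key : c * ((‖u‖ : ℂ))^2 = ((‖tak S u‖ : ℂ))^2 := by
    have h1 : inner (𝕜 := ℂ) u (tak S (tak S u)) = ((‖tak S u‖ : ℂ))^2 := by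
      calc inner (𝕜 := ℂ) u (tak S (tak S u))
          = (starRingEnd ℂ) (inner (𝕜 := ℂ) (tak S (tak S u)) u) := (inner_conj_symm _ _).symm
        _ = (starRingEnd ℂ) (inner (𝕜 := ℂ) (tak S u) (tak S u)) := by
            rw [tak_inner S hS]
        _ = ((‖tak S u‖ : ℂ))^2 := by
            rw [inner_self_eq_norm_sq_to_K]
            simp [← Complex.ofReal_pow]
    have h2 : inner (𝕜 := ℂ) u (tak S (tak S u)) = c * ((‖u‖ : ℂ))^2 := by
      rw [hA, inner_smul_right, inner_self_eq_norm_sq_to_K]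
      rfl
    rw [← h1, h2]
  set σ : ℝ := ‖tak S u‖ / ‖u‖ with hσ
  have hσ0 : 0 ≤ σ := div_nonneg (norm_nonneg _) (norm_nonneg _)
  have hX : ((‖u‖ : ℂ)) ≠ 0 := Complex.ofReal_ne_zero.mpr hnu
  have hc2 : c = ((σ : ℂ))^2 := by
    have hcast : (σ : ℂ) = (‖tak S u‖ : ℂ) / (‖u‖ : ℂ) := by
      rw [hσ]; push_cast; ring
    rw [hcast, div_pow, ← key, mul_div_assoc, div_self (pow_ne_zero 2 hX), mul_one]
  have hstarσ : star ((σ : ℂ)) = (σ : ℂ) := by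
    simp [Complex.star_def, Complex.conj_ofReal]
  set w : EuclideanSpace ℂ (Fin d) := tak S u + (σ : ℂ) • u with hw
  have hTw : tak S w = (σ : ℂ) • w := by
    rw [hw, tak_add, tak_smul, hA, hc2, hstarσ, smul_add, smul_smul, ← sq, add_comm]
  by_cases hw0 : w = 0
  · have hTu' : tak S u = -((σ : ℂ) • u) := by
      have h0 := hw0
      rw [hw] at h0
      exact eq_neg_of_add_eq_zero_left h0
    refine ⟨((‖u‖⁻¹ : ℝ) : ℂ) • (Complex.I • u), W.smul_mem _ (W.smul_mem _ huW), ?_, σ, hσ0, ?_⟩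
    · rw [norm_smul, norm_smul, Complex.norm_I, one_mul]
      simp [abs_of_nonneg (inv_nonneg.mpr (norm_nonneg u)), inv_mul_cancel₀ hnu]
    · rw [tak_smul, tak_smul, hTu']
      rw [show star (((‖u‖⁻¹ : ℝ)) : ℂ) = ((‖u‖⁻¹ : ℝ) : ℂ) by
        simp [Complex.star_def, Complex.conj_ofReal]]
      rw [show star Complex.I = -Complex.I by simp]
      simp only [smul_neg, neg_smul, neg_neg, smul_smul]
      module
  · refine ⟨((‖w‖⁻¹ : ℝ) : ℂ) • w, W.smul_mem _ (W.add_mem hTu (W.smul_mem _ huW)), ?_, σ, hσ0, ?_⟩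
    · have hnw : ‖w‖ ≠ 0 := norm_ne_zero_iff.mpr hw0
      rw [norm_smul]
      simp [abs_of_nonneg (inv_nonneg.mpr (norm_nonneg w)), inv_mul_cancel₀ hnw]
    · rw [tak_smul, hTw, smul_smul, smul_smul]
      congr 1
      rw [show star (((‖w‖⁻¹ : ℝ)) : ℂ) = ((‖w‖⁻¹ : ℝ) : ℂ) by simp [Complex.star_def, Complex.conj_ofReal]]
      ring


lemma takagi_family (S : Matrix (Fin d) (Fin d) ℂ) (hS : Sᵀ = S) :
    ∀ (k : ℕ) (W : Submodule ℂ (EuclideanSpace ℂ (Fin d))),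
      Module.finrank ℂ W = k → (∀ x ∈ W, tak S x ∈ W) →
      ∃ (v : Fin k → EuclideanSpace ℂ (Fin d)) (σ : Fin k → ℝ),
        Orthonormal ℂ v ∧ (∀ i, v i ∈ W) ∧
        ∀ i, 0 ≤ σ i ∧ tak S (v i) = (σ i : ℂ) • v i := by
  intro k
  induction k with
  | zero =>
    intro W _ _
    exact ⟨finZeroElim, finZeroElim, orthonormal_iff_ite.mpr (fun i => i.elim0),
      fun i => i.elim0, fun i => i.elim0⟩
  | succ k ih =>
    intro W hrank hinv
    have hW : W ≠ ⊥ := by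
      intro h
      rw [h] at hrank
      simp [finrank_bot] at hrank
    obtain ⟨x, hxW, hx1, σ0, hσ00, hTx⟩ := exists_takvec S hS W hW hinv
    have hx0 : x ≠ 0 := by
      intro h
      rw [h, norm_zero] at hx1
      norm_num at hx1
    have hle : (ℂ ∙ x) ≤ W := (Submodule.span_singleton_le_iff_mem x W).mpr hxW
    have hdim : Module.finrank ℂ (((ℂ ∙ x)ᗮ ⊓ W : Submodule ℂ (EuclideanSpace ℂ (Fin d)))) = k := by
      apply Submodule.finrank_add_inf_finrank_orthogonal' hle
      rw [finrank_span_singleton hx0, hrank]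
      omega
    have hinv' : ∀ y ∈ ((ℂ ∙ x)ᗮ ⊓ W : Submodule ℂ (EuclideanSpace ℂ (Fin d))),
        tak S y ∈ ((ℂ ∙ x)ᗮ ⊓ W : Submodule ℂ (EuclideanSpace ℂ (Fin d))) := by
      rintro y ⟨hy1, hy2⟩
      have hxy : inner (𝕜 := ℂ) x y = 0 :=
        Submodule.mem_orthogonal_singleton_iff_inner_right.mp hy1
      refine ⟨Submodule.mem_orthogonal_singleton_iff_inner_right.mpr ?_, hinv _ hy2⟩
      have h2 : inner (𝕜 := ℂ) (tak S y) x = 0 := by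
        rw [tak_inner S hS y x, hTx, inner_smul_left, hxy, mul_zero]
      rw [← inner_conj_symm, h2, map_zero]
    obtain ⟨v', σ', hon', hmem', hev'⟩ := ih _ hdim hinv'
    have hxv' : ∀ i, inner (𝕜 := ℂ) x (v' i) = 0 := fun i =>
      Submodule.mem_orthogonal_singleton_iff_inner_right.mp (hmem' i).1
    have hv'x : ∀ i, inner (𝕜 := ℂ) (v' i) x = 0 := fun i => by
      rw [← inner_conj_symm, hxv', map_zero]
    refine ⟨Fin.cons x v', Fin.cons σ0 σ', ?_, ?_, ?_⟩
    · rw [orthonormal_iff_ite]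
      intro i j
      refine Fin.cases ?_ (fun i' => ?_) i
      · refine Fin.cases ?_ (fun j' => ?_) j
        · simp [inner_self_eq_norm_sq_to_K, hx1]
        · simp [Fin.cons_zero, Fin.cons_succ, hxv' j', (Fin.succ_ne_zero j').symm]
      · refine Fin.cases ?_ (fun j' => ?_) j
        · simp [Fin.cons_zero, Fin.cons_succ, hv'x i', Fin.succ_ne_zero i']
        · have := orthonormal_iff_ite.mp hon' i' j'
          simp only [Fin.cons_succ]
          rw [this]
          simp [Fin.succ_inj]
    · intro i
      refine Fin.cases ?_ (fun i' => ?_) i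
      · simpa using hxW
      · simpa using (hmem' i').2
    · intro i
      refine Fin.cases ?_ (fun i' => ?_) i
      · simpa using ⟨hσ00, hTx⟩
      · simpa using hev' i'

lemma takagi (S : Matrix (Fin d) (Fin d) ℂ) (hS : Sᵀ = S) :
    ∃ Q ∈ Matrix.unitaryGroup (Fin d) ℂ, ∃ σ : Fin d → ℝ, (∀ i, 0 ≤ σ i) ∧
      S = Q * Matrix.diagonal (fun i => (σ i : ℂ)) * Qᵀ := by
  obtain ⟨v, σ, hon, -, hev⟩ := takagi_family S hS d ⊤
    (by simp [finrank_top]) (fun x _ => Submodule.mem_top)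
  set Q : Matrix (Fin d) (Fin d) ℂ := Matrix.of (fun i j => v j i) with hQdef
  have hQu : Q ∈ Matrix.unitaryGroup (Fin d) ℂ := by
    rw [Matrix.mem_unitaryGroup_iff']
    ext i j
    have h1 := orthonormal_iff_ite.mp hon i j
    rw [PiLp.inner_apply] at h1
    simp only [RCLike.inner_apply, starRingEnd_apply] at h1
    simp only [Matrix.mul_apply, Matrix.star_apply, Matrix.one_apply, hQdef, Matrix.of_apply]
    rw [← h1]
    exact Finset.sum_congr rfl fun _ _ => mul_comm _ _
  have hcol : S * Qᴴᵀ = Q * Matrix.diagonal (fun i => (σ i : ℂ)) := by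
    ext i j
    have h1 := congrArg (fun w => w i) (hev j).2
    simp only [tak_apply] at h1
    simp only [Matrix.mul_apply, Matrix.transpose_apply, Matrix.conjTranspose_apply,
      Matrix.diagonal_apply, hQdef, Matrix.of_apply]
    rw [h1]
    rw [Finset.sum_eq_single j (fun b _ hb => by simp [hb]) (by simp)]
    simp [mul_comm]
  have hQQh : Q * Qᴴ = 1 := by
    have h := Matrix.mem_unitaryGroup_iff.mp hQu
    rwa [Matrix.star_eq_conjTranspose] at h
  have hQbQt : Qᴴᵀ * Qᵀ = 1 := by
    rw [← Matrix.transpose_mul, hQQh, Matrix.transpose_one]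
  refine ⟨Q, hQu, σ, fun i => (hev i).1, ?_⟩
  calc S = S * (Qᴴᵀ * Qᵀ) := by rw [hQbQt, mul_one]
    _ = (S * Qᴴᵀ) * Qᵀ := by rw [mul_assoc]
    _ = Q * Matrix.diagonal (fun i => (σ i : ℂ)) * Qᵀ := by rw [hcol]

end Takagi

open scoped MatrixOrder

lemma msqrt_eq_sqrt {d : ℕ} (A : Matrix (Fin d) (Fin d) ℂ) (hA : A.PosSemidef) :
    msqrt A = CFC.sqrt A := by
  rw [CFC.sqrt_eq_real_sqrt A hA.nonneg, cfcₙ_eq_cfc, hA.1.cfc_eq]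
  unfold msqrt
  rw [dif_pos hA]
  simp [IsHermitian.cfc, Unitary.conjStarAlgAut_apply, Function.comp_def]

/-- every density matrix admits a conjugate-orthogonal pure-state
decomposition, with diagonal values D_j the eigenvalues of √(√ρ ρᵀ √ρ); consequently
Σ_j λ_j |⟨μ_j*,μ_j⟩| = √F(ρ,ρᵀ). -/
theorem conjugate_orthogonal_decomposition {d : ℕ}
    (ρ : Matrix (Fin d) (Fin d) ℂ) (hρ : IsDensity ρ) :
    ∃ (lam : Fin d → ℝ) (μ : Fin d → Fin d → ℂ) (D : Fin d → ℝ),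
      (∀ j, 0 ≤ lam j) ∧ (∑ j, lam j = 1) ∧
      (∀ j, hinner (μ j) (μ j) = 1) ∧
      ρ = ∑ j, (lam j : ℂ) • Matrix.vecMulVec (μ j) (cconj (μ j)) ∧
      (∀ j, 0 ≤ D j) ∧
      (∀ i j, (Real.sqrt (lam i * lam j) : ℂ) * hinner (μ i) (cconj (μ j))
        = if i = j then (D j : ℂ) else 0) ∧
      (∃ U ∈ Matrix.unitaryGroup (Fin d) ℂ,
        msqrt (msqrt ρ * ρᵀ * msqrt ρ)
          = U * Matrix.diagonal (fun j => (D j : ℂ)) * Uᴴ) ∧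
      ∑ j, lam j * ‖hinner (cconj (μ j)) (μ j)‖ = rootFid ρ ρᵀ := by
  classical
  obtain ⟨hPSD, htr⟩ := hρ
  have hBdef : msqrt ρ = CFC.sqrt ρ := msqrt_eq_sqrt ρ hPSD
  set B := CFC.sqrt ρ with hB
  have hBps : B.PosSemidef := (CFC.sqrt_nonneg ρ).posSemidef
  have hBH : Bᴴ = B := hBps.1
  have hBtH : (Bᵀ)ᴴ = Bᵀ := by
    ext i j
    simp only [Matrix.conjTranspose_apply, Matrix.transpose_apply]
    have := congrFun (congrFun hBH j) i
    simpa [Matrix.conjTranspose_apply] using this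
  have hB2 : B * B = ρ := CFC.sqrt_mul_sqrt_self ρ hPSD.nonneg
  set S : Matrix (Fin d) (Fin d) ℂ := Bᵀ * B with hSdef
  have hSsym : Sᵀ = S := by
    rw [hSdef, Matrix.transpose_mul, Matrix.transpose_transpose]
  obtain ⟨Q, hQu, σ, hσ0, hTak⟩ := takagi S hSsym
  have hQQh : Q * Qᴴ = 1 := by
    have h := Matrix.mem_unitaryGroup_iff.mp hQu
    rwa [Matrix.star_eq_conjTranspose] at h
  have hQhQ : Qᴴ * Q = 1 := by
    have h := Matrix.mem_unitaryGroup_iff'.mp hQu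
    rwa [Matrix.star_eq_conjTranspose] at h
  have hQbQt : Qᴴᵀ * Qᵀ = 1 := by
    rw [← Matrix.transpose_mul, hQQh, Matrix.transpose_one]
  have hQtQb : Qᵀ * Qᴴᵀ = 1 := by
    rw [← Matrix.transpose_mul, hQhQ, Matrix.transpose_one]
  have hQhtH : (Qᴴᵀ)ᴴ = Qᵀ := by
    ext i j
    simp [Matrix.conjTranspose_apply, Matrix.transpose_apply]
  set D : Matrix (Fin d) (Fin d) ℂ := Matrix.diagonal (fun i => (σ i : ℂ)) with hD
  have hDH : Dᴴ = D := by
    ext i j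
    rw [hD, Matrix.conjTranspose_apply]
    by_cases h : i = j
    · subst h
      simp [Matrix.diagonal_apply_eq, Complex.star_def, Complex.conj_ofReal]
    · rw [Matrix.diagonal_apply_ne _ (Ne.symm h), Matrix.diagonal_apply_ne _ h, star_zero]
  set N : Matrix (Fin d) (Fin d) ℂ := B * Qᴴᵀ with hN
  have hNNh : N * Nᴴ = ρ := by
    rw [hN, Matrix.conjTranspose_mul, hQhtH, hBH]
    calc B * Qᴴᵀ * (Qᵀ * B) = B * (Qᴴᵀ * Qᵀ) * B := by
          noncomm_ring
      _ = ρ := by rw [hQbQt, mul_one, hB2]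
  have hNtN : Nᵀ * N = D := by
    have h1 : Nᵀ = Qᴴ * Bᵀ := by
      rw [hN, Matrix.transpose_mul, Matrix.transpose_transpose]
    rw [h1, hN]
    calc Qᴴ * Bᵀ * (B * Qᴴᵀ) = Qᴴ * (Bᵀ * B) * Qᴴᵀ := by
          noncomm_ring
      _ = Qᴴ * (Q * D * Qᵀ) * Qᴴᵀ := by rw [← hSdef, hTak]
      _ = (Qᴴ * Q) * (D * (Qᵀ * Qᴴᵀ)) := by noncomm_ring
      _ = D := by rw [hQhQ, hQtQb, one_mul, mul_one]
  have hSq : (Qᴴᵀ * D * Qᵀ) * (Qᴴᵀ * D * Qᵀ) = B * ρᵀ * B := by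
    have hSH : Sᴴ = B * Bᵀ := by
      rw [hSdef, Matrix.conjTranspose_mul, hBH, hBtH]
    have hρt : ρᵀ = Bᵀ * Bᵀ := by
      rw [← hB2, Matrix.transpose_mul]
    have h2 : Sᴴ * S = B * ρᵀ * B := by
      rw [hSH, hSdef, hρt]
      simp only [mul_assoc]
    have hXX : (Qᴴᵀ * D * Qᵀ) * (Qᴴᵀ * D * Qᵀ) = Qᴴᵀ * (D * (D * Qᵀ)) := by
      calc (Qᴴᵀ * D * Qᵀ) * (Qᴴᵀ * D * Qᵀ)
          = Qᴴᵀ * (D * ((Qᵀ * Qᴴᵀ) * (D * Qᵀ))) := by noncomm_ring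
        _ = Qᴴᵀ * (D * (D * Qᵀ)) := by rw [hQtQb, one_mul]
    have h4 : (Qᵀ)ᴴ = Qᴴᵀ := by
      ext i j
      simp [Matrix.conjTranspose_apply, Matrix.transpose_apply]
    have hSHS : Sᴴ * S = Qᴴᵀ * (D * (D * Qᵀ)) := by
      have h3 : Sᴴ = (Qᵀ)ᴴ * ((Q * D)ᴴ) := by
        conv_lhs => rw [hTak]
        rw [Matrix.conjTranspose_mul]
      rw [h3, Matrix.conjTranspose_mul, h4, hDH]
      conv_lhs => rw [hTak]
      calc Qᴴᵀ * (D * Qᴴ) * (Q * D * Qᵀ)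
          = Qᴴᵀ * (D * ((Qᴴ * Q) * (D * Qᵀ))) := by noncomm_ring
        _ = Qᴴᵀ * (D * (D * Qᵀ)) := by rw [hQhQ, one_mul]
    rw [hXX, ← hSHS, h2]
  have hDps : D.PosSemidef := by
    rw [hD]
    exact Matrix.posSemidef_diagonal_iff.mpr (fun i => by
      rw [Complex.zero_le_real]
      exact hσ0 i)
  have hPSDX : (Qᴴᵀ * D * Qᵀ).PosSemidef := by
    have h := hDps.mul_mul_conjTranspose_same Qᴴᵀ
    rwa [hQhtH] at h
  have hBρB : (B * ρᵀ * B).PosSemidef := by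
    have h := hPSD.transpose.mul_mul_conjTranspose_same B
    rwa [hBH] at h
  have hMs : msqrt (msqrt ρ * ρᵀ * msqrt ρ) = Qᴴᵀ * D * Qᵀ := by
    rw [hBdef]
    rw [msqrt_eq_sqrt _ hBρB]
    exact CFC.sqrt_unique hSq hPSDX.nonneg
  set v : Fin d → Fin d → ℂ := fun j i => N i j with hv
  have hvij : ∀ i j, (∑ k, v i k * v j k) = if i = j then ((σ j : ℝ) : ℂ) else 0 := by
    intro i j
    have h1 := congrFun (congrFun hNtN i) j
    rw [hD] at h1
    simp only [Matrix.mul_apply, Matrix.transpose_apply, Matrix.diagonal_apply] at h1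
    simp only [hv]
    rw [h1]
    by_cases h : i = j
    · subst h; simp
    · simp [h]
  have hρik : ∀ i k, ρ i k = ∑ j, v j i * star (v j k) := by
    intro i k
    have h1 := congrFun (congrFun hNNh i) k
    rw [← h1]
    simp [Matrix.mul_apply, Matrix.conjTranspose_apply, hv]
  set lam : Fin d → ℝ := fun j => ∑ i, Complex.normSq (v j i) with hlam
  have hlam0 : ∀ j, 0 ≤ lam j := fun j => Finset.sum_nonneg fun i _ => Complex.normSq_nonneg _
  have hsq : ∀ j, Real.sqrt (lam j) ^ 2 = lam j := fun j => Real.sq_sqrt (hlam0 j)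
  have hlamzero : ∀ j, v j = 0 → lam j = 0 := by
    intro j h
    have h2 : ∀ i, v j i = 0 := fun i => by rw [h]; rfl
    simp [hlam, h2]
  have hlamne : ∀ j, v j ≠ 0 → lam j ≠ 0 := by
    intro j hvj hl
    apply hvj
    funext i
    have h1 : ∀ i ∈ Finset.univ, Complex.normSq (v j i) = 0 := by
      rw [hlam] at hl
      exact (Finset.sum_eq_zero_iff_of_nonneg (fun i _ => Complex.normSq_nonneg _)).mp hl
    have h2 := h1 i (Finset.mem_univ i)
    simpa using Complex.normSq_eq_zero.mp h2
  have hsne : ∀ j, v j ≠ 0 → Real.sqrt (lam j) ≠ 0 := by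
    intro j h h2
    apply hlamne j h
    have h3 := hsq j
    rw [h2] at h3
    simpa using h3.symm
  set μ : Fin d → Fin d → ℂ :=
    fun j => if v j = 0 then Pi.single j 1 else (((Real.sqrt (lam j))⁻¹ : ℝ) : ℂ) • v j with hμ
  have hkey : ∀ j, ((Real.sqrt (lam j) : ℝ) : ℂ) • μ j = v j := by
    intro j
    by_cases h : v j = 0
    · simp only [hμ, if_pos h]
      rw [hlamzero j h, Real.sqrt_zero, h]
      simp
    · simp only [hμ, if_neg h]
      rw [smul_smul, ← Complex.ofReal_mul, mul_inv_cancel₀ (hsne j h), Complex.ofReal_one, one_smul]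
  have e1 : ∀ j i, v j i = ((Real.sqrt (lam j) : ℝ) : ℂ) * μ j i := by
    intro j i
    have h1 := congrFun (hkey j) i
    simpa [Pi.smul_apply, smul_eq_mul] using h1.symm
  have hll : ∀ j, ((lam j : ℝ) : ℂ) = ((Real.sqrt (lam j) : ℝ) : ℂ) * ((Real.sqrt (lam j) : ℝ) : ℂ) := by
    intro j
    rw [← Complex.ofReal_mul, Real.mul_self_sqrt (hlam0 j)]
  have hsum : ∑ j, lam j = 1 := by
    have h1 : ((∑ j, lam j : ℝ) : ℂ) = 1 := by
      rw [← htr]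
      have h2 : ∀ i, ρ i i = ∑ j, ((Complex.normSq (v j i) : ℝ) : ℂ) := by
        intro i
        rw [hρik i i]
        refine Finset.sum_congr rfl fun j _ => ?_
        rw [Complex.star_def, Complex.mul_conj]
      rw [Matrix.trace]
      simp only [Matrix.diag]
      rw [Finset.sum_congr rfl (fun i _ => h2 i)]
      simp only [hlam]
      push_cast
      exact Finset.sum_comm
    exact_mod_cast h1
  have hnorm : ∀ j, hinner (μ j) (μ j) = 1 := by
    intro j
    by_cases h : v j = 0
    · simp only [hinner, hμ, if_pos h, Pi.single_apply]
      rw [Finset.sum_eq_single j (fun b _ hb => by simp [hb]) (by simp)]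
      simp
    · simp only [hinner, hμ, if_neg h, Pi.smul_apply, smul_eq_mul]
      have h1 : ∀ i, star ((((Real.sqrt (lam j))⁻¹ : ℝ) : ℂ) * v j i) *
          ((((Real.sqrt (lam j))⁻¹ : ℝ) : ℂ) * v j i)
          = ((((Real.sqrt (lam j))⁻¹ ^ 2 * Complex.normSq (v j i) : ℝ)) : ℂ) := by
        intro i
        simp only [Complex.star_def, _root_.map_mul, Complex.conj_ofReal]
        push_cast
        linear_combination ((Real.sqrt (lam j) : ℂ))⁻¹ ^ 2 * Complex.mul_conj (v j i)
      rw [Finset.sum_congr rfl (fun i _ => h1 i), ← Complex.ofReal_sum, ← Finset.mul_sum]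
      rw [Complex.ofReal_eq_one, inv_pow, hsq j]
      exact inv_mul_cancel₀ (hlamne j h)
  have hdecomp : ρ = ∑ j, ((lam j : ℝ) : ℂ) • Matrix.vecMulVec (μ j) (cconj (μ j)) := by
    ext i k
    rw [hρik i k, Matrix.sum_apply]
    refine Finset.sum_congr rfl fun j _ => ?_
    rw [Matrix.smul_apply, Matrix.vecMulVec_apply, smul_eq_mul]
    simp only [cconj]
    rw [e1 j i, e1 j k, hll j]
    simp only [Complex.star_def, _root_.map_mul, Complex.conj_ofReal]
    ring
  have horth : ∀ i j, ((Real.sqrt (lam i * lam j) : ℝ) : ℂ) * hinner (μ i) (cconj (μ j))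
      = if i = j then ((σ j : ℝ) : ℂ) else 0 := by
    intro i j
    rw [Real.sqrt_mul (hlam0 i), Complex.ofReal_mul, hinner]
    simp only [cconj, star_star]
    have h1 : ((Real.sqrt (lam i) : ℝ) : ℂ) * ((Real.sqrt (lam j) : ℝ) : ℂ) *
        (∑ k, star (μ i k) * star (μ j k)) = star (∑ k, v i k * v j k) := by
      rw [star_sum, Finset.mul_sum]
      refine Finset.sum_congr rfl fun k _ => ?_
      rw [e1 i k, e1 j k]
      simp only [Complex.star_def, _root_.map_mul, Complex.conj_ofReal]
      ring
    rw [mul_assoc] at h1 ⊢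
    rw [h1, hvij i j]
    by_cases h : i = j
    · subst h
      simp [Complex.star_def, Complex.conj_ofReal]
    · simp [h]
  have hterm : ∀ j, lam j * ‖hinner (cconj (μ j)) (μ j)‖ = σ j := by
    intro j
    have h1 : ((lam j : ℝ) : ℂ) * (hinner (cconj (μ j)) (μ j)) = ((σ j : ℝ) : ℂ) := by
      rw [hinner, Finset.mul_sum]
      have h3 : (∑ k, v j k * v j k) = ((σ j : ℝ) : ℂ) := by
        rw [hvij j j]
        simp
      rw [← h3]
      refine Finset.sum_congr rfl fun k _ => ?_
      simp only [cconj, star_star]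
      rw [e1 j k, hll j]
      ring
    have h2 := congrArg norm h1
    rw [norm_mul, Complex.norm_real, Complex.norm_real, Real.norm_of_nonneg (hlam0 j),
      Real.norm_of_nonneg (hσ0 j)] at h2
    exact h2
  refine ⟨lam, μ, σ, hlam0, hsum, hnorm, ?_, hσ0, ?_, ⟨Qᴴᵀ, ?_, ?_⟩, ?_⟩
  · exact hdecomp
  · intro i j
    exact horth i j
  · rw [Matrix.mem_unitaryGroup_iff, Matrix.star_eq_conjTranspose, hQhtH]
    exact hQbQt
  · rw [hMs, hQhtH, ← hD]
  · rw [Finset.sum_congr rfl (fun j _ => hterm j)]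
    unfold rootFid
    rw [hMs]
    have htrace : (Qᴴᵀ * D * Qᵀ).trace = ((∑ j, σ j : ℝ) : ℂ) := by
      rw [Matrix.trace_mul_cycle, hQtQb, one_mul, hD, Matrix.trace_diagonal]
      push_cast
      rfl
    rw [htrace, Complex.ofReal_re]
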